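/- Let A ⊆ ℝ be an open invex set with respect to η : A × A → ℝ and a, b ∈ A with a < a + η(b,a), with f′ integrable on [a, a+η(b,a)]. Suppose f : A → ℝ is differentiable and |f′|^q is preinvex on A for some q > 1. Then for every α > 0: |(f(a)+f(a+η(b,a)))/2 − (Γ(α+1)/(2 η(b,a)^α))[J_{a+}^α f(a+η(b,a)) + J_{(a+η(b,a))−}^α f(a)]| ≤ (η(b,a)/(α+1)) (1 − 1/2^α) ((|f′(a)|^q + |f′(b)|^q)/2)^{1/q}. -/

import Mathlib

open MeasureTheory intervalIntegral

/-- Riemann-Liouville left fractional integral `J_{a+}^α f(x)`. -/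
noncomputable def JL (α a x : ℝ) (f : ℝ → ℝ) : ℝ :=
  (1 / Real.Gamma α) * ∫ t in a..x, (x - t) ^ (α - 1) * f t

/-- Riemann-Liouville right fractional integral `J_{b-}^α f(x)`. -/
noncomputable def JR (α x b : ℝ) (f : ℝ → ℝ) : ℝ :=
  (1 / Real.Gamma α) * ∫ t in x..b, (t - x) ^ (α - 1) * f t

/-- `A` is invex with respect to `η`. -/
def InvexSet (A : Set ℝ) (η : ℝ → ℝ → ℝ) : Prop :=
  ∀ x ∈ A, ∀ y ∈ A, ∀ t ∈ Set.Icc (0:ℝ) 1, x + t * η y x ∈ A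

/-- `f` is preinvex with respect to `η` on `A`. -/
def PreinvexOn (A : Set ℝ) (η : ℝ → ℝ → ℝ) (f : ℝ → ℝ) : Prop :=
  ∀ x ∈ A, ∀ y ∈ A, ∀ t ∈ Set.Icc (0:ℝ) 1,
    f (x + t * η y x) ≤ (1 - t) * f x + t * f y

/-- Condition C of Mohan and Neogy. -/
def CondC (A : Set ℝ) (η : ℝ → ℝ → ℝ) : Prop :=
  ∀ x ∈ A, ∀ y ∈ A, ∀ t ∈ Set.Icc (0:ℝ) 1,
    η y (y + t * η x y) = -t * η x y ∧ η x (y + t * η x y) = (1 - t) * η x y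

/-- Substitution `s = a + t*c` in an interval integral. -/
lemma integral_affine_subst (φ : ℝ → ℝ) (a c : ℝ) (hc : c ≠ 0) :
    ∫ s in a..(a+c), φ s = c * ∫ t in (0:ℝ)..1, φ (a + t * c) := by
  have h1 : (∫ t in (0:ℝ)..1, φ (a + t * c)) = ∫ t in (0:ℝ)..1, φ (c * t + a) := by
    apply intervalIntegral.integral_congr
    intro x _
    ring_nf
  rw [h1, intervalIntegral.integral_comp_mul_add φ hc a]
  rw [smul_eq_mul, ← mul_assoc, mul_inv_cancel₀ hc, one_mul]
  norm_num [add_comm]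

/-- Hölder's inequality on `[0,1]` with weight `w`. -/
lemma holder_weight_01 (w g : ℝ → ℝ) (p q : ℝ) (hpq : Real.HolderConjugate p q)
    (hw_cont : Continuous w) (hw_nonneg : ∀ t, 0 ≤ w t)
    (hw_le : ∀ t ∈ Set.Ioc (0:ℝ) 1, w t ≤ 1)
    (hg_meas : Measurable g) (M : ℝ) (hM : ∀ t ∈ Set.Ioc (0:ℝ) 1, |g t| ≤ M) :
    ∫ t in (0:ℝ)..1, w t * |g t| ≤
      (∫ t in (0:ℝ)..1, w t) ^ (1/p) * (∫ t in (0:ℝ)..1, w t * |g t| ^ q) ^ (1/q) := by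
  have h01 : (0:ℝ) ≤ 1 := zero_le_one
  rw [intervalIntegral.integral_of_le h01, intervalIntegral.integral_of_le h01,
    intervalIntegral.integral_of_le h01]
  set μ : Measure ℝ := volume.restrict (Set.Ioc (0:ℝ) 1) with hμ
  haveI : IsFiniteMeasure μ := by
    constructor
    rw [hμ, Measure.restrict_apply_univ, Real.volume_Ioc]
    exact ENNReal.ofReal_lt_top
  set f₀ : ℝ → ℝ := fun t => (w t) ^ (1/p) with hf₀
  set g₀ : ℝ → ℝ := fun t => (w t) ^ (1/q) * |g t| with hg₀
  have hf₀_cont : Continuous f₀ := (Real.continuous_rpow_const hpq.one_div_nonneg).comp hw_cont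
  have hwq_cont : Continuous fun t => (w t) ^ (1/q) :=
    (Real.continuous_rpow_const hpq.symm.one_div_nonneg).comp hw_cont
  have hg₀_meas : Measurable g₀ := hwq_cont.measurable.mul hg_meas.abs
  have hf₀_mem : MemLp f₀ (ENNReal.ofReal p) μ := by
    apply MemLp.of_bound hf₀_cont.aestronglyMeasurable 1
    filter_upwards [ae_restrict_mem measurableSet_Ioc] with t ht
    rw [Real.norm_eq_abs, abs_of_nonneg (Real.rpow_nonneg (hw_nonneg t) _)]
    exact Real.rpow_le_one (hw_nonneg t) (hw_le t ht) hpq.one_div_nonneg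
  have hg₀_mem : MemLp g₀ (ENNReal.ofReal q) μ := by
    apply MemLp.of_bound hg₀_meas.aestronglyMeasurable (|M|)
    filter_upwards [ae_restrict_mem measurableSet_Ioc] with t ht
    have h1 : (w t) ^ (1/q) ≤ 1 :=
      Real.rpow_le_one (hw_nonneg t) (hw_le t ht) hpq.symm.one_div_nonneg
    have h2 : 0 ≤ (w t) ^ (1/q) := Real.rpow_nonneg (hw_nonneg t) _
    rw [Real.norm_eq_abs, abs_of_nonneg (mul_nonneg h2 (abs_nonneg _))]
    calc (w t) ^ (1/q) * |g t| ≤ 1 * |g t| :=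
          mul_le_mul_of_nonneg_right h1 (abs_nonneg _)
      _ = |g t| := one_mul _
      _ ≤ M := hM t ht
      _ ≤ |M| := le_abs_self M
  have key := integral_mul_le_Lp_mul_Lq_of_nonneg hpq
    (Filter.Eventually.of_forall fun t => Real.rpow_nonneg (hw_nonneg t) _)
    (Filter.Eventually.of_forall fun t =>
      mul_nonneg (Real.rpow_nonneg (hw_nonneg t) _) (abs_nonneg _))
    hf₀_mem hg₀_mem
  have e1 : ∫ t, f₀ t * g₀ t ∂μ = ∫ t, w t * |g t| ∂μ := by
    apply MeasureTheory.integral_congr_ae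
    apply Filter.Eventually.of_forall
    intro t
    show (w t) ^ (1/p) * ((w t) ^ (1/q) * |g t|) = w t * |g t|
    rw [← mul_assoc, ← Real.rpow_add' (hw_nonneg t)
      (by rw [one_div, one_div, hpq.inv_add_inv_eq_one]; norm_num)]
    rw [one_div, one_div, hpq.inv_add_inv_eq_one, Real.rpow_one]
  have e2 : ∫ t, f₀ t ^ p ∂μ = ∫ t, w t ∂μ := by
    apply MeasureTheory.integral_congr_ae
    apply Filter.Eventually.of_forall
    intro t
    show ((w t) ^ (1/p)) ^ p = w t
    rw [one_div, Real.rpow_inv_rpow (hw_nonneg t) hpq.ne_zero]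
  have e3 : ∫ t, g₀ t ^ q ∂μ = ∫ t, w t * |g t| ^ q ∂μ := by
    apply MeasureTheory.integral_congr_ae
    apply Filter.Eventually.of_forall
    intro t
    show ((w t) ^ (1/q) * |g t|) ^ q = w t * |g t| ^ q
    rw [Real.mul_rpow (Real.rpow_nonneg (hw_nonneg t) _) (abs_nonneg _),
      one_div, Real.rpow_inv_rpow (hw_nonneg t) hpq.symm.ne_zero]
  rw [e1, e2, e3] at key
  exact key

set_option maxHeartbeats 1000000 in
theorem fractional_estimate_power_mean_preinvex
    (A : Set ℝ) (η : ℝ → ℝ → ℝ) (a b : ℝ) (f : ℝ → ℝ) (α q : ℝ)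
    (hA : IsOpen A) (hinv : InvexSet A η) (ha : a ∈ A) (hb : b ∈ A)
    (hab : a < a + η b a)
    (hdiff : ∀ x ∈ A, DifferentiableAt ℝ f x)
    (hint : IntervalIntegrable (deriv f) volume a (a + η b a))
    (hq : 1 < q)
    (hpre : PreinvexOn A η (fun x => |deriv f x| ^ q))
    (hα : 0 < α) :
    |(f a + f (a + η b a)) / 2 -
        Real.Gamma (α + 1) / (2 * (η b a) ^ α) *
          (JL α a (a + η b a) f + JR α a (a + η b a) f)| ≤
      η b a / (α + 1) * (1 - 1 / 2 ^ α) *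
        ((|deriv f a| ^ q + |deriv f b| ^ q) / 2) ^ (1 / q) := by
  set c := η b a with hc
  have hc0 : 0 < c := by linarith
  have hq0 : 0 < q := lt_trans one_pos hq
  -- membership of the segment in A
  have hmem : ∀ t ∈ Set.Icc (0:ℝ) 1, a + t * c ∈ A := fun t ht => hinv a ha b hb t ht
  -- the derivative along the segment
  set g : ℝ → ℝ := fun t => deriv f (a + t * c) with hgdef
  have hF : ∀ t, a + t * c ∈ A → HasDerivAt (fun s => f (a + s * c)) (g t * c) t := by
    intro t ht
    have h1 : HasDerivAt (fun s : ℝ => a + s * c) c t := by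
      simpa using ((hasDerivAt_id t).mul_const c).const_add a
    exact (hdiff _ ht).hasDerivAt.comp t h1
  have hcontF : ContinuousOn (fun s => f (a + s * c)) (Set.Icc 0 1) := fun t ht =>
    ((hF t (hmem t ht)).continuousAt).continuousWithinAt
  have hcontF' : ContinuousOn (fun s => f (a + s * c)) (Set.uIcc 0 1) := by
    rwa [Set.uIcc_of_le zero_le_one]
  -- integrability of g on [0,1]
  have hgint : IntervalIntegrable g volume 0 1 := by
    have h1 := hint.comp_add_left a
    have h2 := h1.comp_mul_left (c := c)
    rw [show a - a = 0 by ring, show a + c - a = c by ring, zero_div, div_self hc0.ne'] at h2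
    have e : (fun x => deriv f (a + c * x)) = g := by
      funext x; simp [hgdef, mul_comm]
    rwa [e] at h2
  -- preinvexity bound
  set A0 := |deriv f a| ^ q with hA0def
  set B0 := |deriv f b| ^ q with hB0def
  have hA0 : 0 ≤ A0 := Real.rpow_nonneg (abs_nonneg _) _
  have hB0 : 0 ≤ B0 := Real.rpow_nonneg (abs_nonneg _) _
  have hpre' : ∀ t ∈ Set.Icc (0:ℝ) 1, |g t| ^ q ≤ (1 - t) * A0 + t * B0 := by
    intro t ht
    exact hpre a ha b hb t ht
  -- bound on |g|
  have hgbd : ∀ t ∈ Set.Icc (0:ℝ) 1, |g t| ≤ (A0 + B0) ^ (1/q) := by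
    intro t ht
    have h1 : |g t| = (|g t| ^ q) ^ (1/q) := by
      rw [one_div, Real.rpow_rpow_inv (abs_nonneg _) hq0.ne']
    rw [h1]
    apply Real.rpow_le_rpow (Real.rpow_nonneg (abs_nonneg _) _)
    · calc |g t| ^ q ≤ (1 - t) * A0 + t * B0 := hpre' t ht
        _ ≤ A0 + B0 := by nlinarith [ht.1, ht.2]
    · positivity
  -- the four auxiliary integrals
  set K₁ := ∫ t in (0:ℝ)..1, (1 - t) ^ (α - 1) * f (a + t * c) with hK₁
  set K₂ := ∫ t in (0:ℝ)..1, t ^ (α - 1) * f (a + t * c) with hK₂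
  set L₁ := ∫ t in (0:ℝ)..1, (1 - t) ^ α * g t with hL₁
  set L₂ := ∫ t in (0:ℝ)..1, t ^ α * g t with hL₂
  -- integrability facts
  have hrpow1 : IntervalIntegrable (fun t : ℝ => (1 - t) ^ (α - 1)) volume 0 1 := by
    have h := (intervalIntegrable_rpow' (a := 0) (b := 1) (show (-1:ℝ) < α - 1 by linarith)).comp_sub_left 1
    norm_num at h
    exact h.symm
  have hrpow2 : IntervalIntegrable (fun t : ℝ => t ^ (α - 1)) volume 0 1 :=
    intervalIntegrable_rpow' (by linarith)
  have hcont_1t : Continuous fun t : ℝ => (1 - t) ^ α :=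
    (Real.continuous_rpow_const hα.le).comp (continuous_const.sub continuous_id)
  have hcont_t : Continuous fun t : ℝ => t ^ α := Real.continuous_rpow_const hα.le
  have hint1 : IntervalIntegrable (fun t : ℝ => (1 - t) ^ (α - 1) * f (a + t * c)) volume 0 1 :=
    hrpow1.mul_continuousOn hcontF'
  have hint2 : IntervalIntegrable (fun t : ℝ => t ^ (α - 1) * f (a + t * c)) volume 0 1 :=
    hrpow2.mul_continuousOn hcontF'
  have hint3 : IntervalIntegrable (fun t : ℝ => (1 - t) ^ α * g t) volume 0 1 :=
    hgint.continuousOn_mul hcont_1t.continuousOn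
  have hint4 : IntervalIntegrable (fun t : ℝ => t ^ α * g t) volume 0 1 :=
    hgint.continuousOn_mul hcont_t.continuousOn
  -- FTC part 1
  have ftc1 : -α * K₁ + c * L₁ = -(f a) := by
    have hD : ∀ x ∈ Set.Ioo (0:ℝ) 1, HasDerivWithinAt (fun t => (1 - t) ^ α * f (a + t * c))
        (-α * ((1 - x) ^ (α - 1) * f (a + x * c)) + c * ((1 - x) ^ α * g x)) (Set.Ioi x) x := by
      intro x hx
      apply HasDerivAt.hasDerivWithinAt
      have h1x : (1:ℝ) - x ≠ 0 := by have := hx.2; intro h; linarith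
      have h0 : HasDerivAt (fun t : ℝ => 1 - t) (-1) x := by
        simpa using (hasDerivAt_id x).const_sub 1
      have hr : HasDerivAt (fun t : ℝ => (1 - t) ^ α) (α * (1 - x) ^ (α - 1) * (-1)) x :=
        (Real.hasDerivAt_rpow_const (x := 1 - x) (p := α) (Or.inl h1x)).comp x h0
      have hm := hr.mul (hF x (hmem x (Set.Ioo_subset_Icc_self hx)))
      refine hm.congr_deriv ?_
      ring
    have hcontG : ContinuousOn (fun t => (1 - t) ^ α * f (a + t * c)) (Set.Icc 0 1) :=
      hcont_1t.continuousOn.mul hcontF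
    have hintD : IntervalIntegrable (fun x => -α * ((1 - x) ^ (α - 1) * f (a + x * c)) +
        c * ((1 - x) ^ α * g x)) volume 0 1 :=
      (hint1.const_mul (-α)).add (hint3.const_mul c)
    have := intervalIntegral.integral_eq_sub_of_hasDeriv_right_of_le zero_le_one hcontG hD hintD
    rw [intervalIntegral.integral_add (hint1.const_mul (-α)) (hint3.const_mul c),
      intervalIntegral.integral_const_mul, intervalIntegral.integral_const_mul] at this
    rw [← hK₁, ← hL₁] at this
    rw [this]
    norm_num [Real.zero_rpow hα.ne', Real.one_rpow]
  -- FTC part 2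
  have ftc2 : α * K₂ + c * L₂ = f (a + c) := by
    have hD : ∀ x ∈ Set.Ioo (0:ℝ) 1, HasDerivWithinAt (fun t => t ^ α * f (a + t * c))
        (α * (x ^ (α - 1) * f (a + x * c)) + c * (x ^ α * g x)) (Set.Ioi x) x := by
      intro x hx
      apply HasDerivAt.hasDerivWithinAt
      have hr : HasDerivAt (fun t : ℝ => t ^ α) (α * x ^ (α - 1)) x :=
        Real.hasDerivAt_rpow_const (Or.inl hx.1.ne')
      have hm := hr.mul (hF x (hmem x (Set.Ioo_subset_Icc_self hx)))
      refine hm.congr_deriv ?_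
      ring
    have hcontG : ContinuousOn (fun t => t ^ α * f (a + t * c)) (Set.Icc 0 1) :=
      hcont_t.continuousOn.mul hcontF
    have hintD : IntervalIntegrable (fun x => α * (x ^ (α - 1) * f (a + x * c)) +
        c * (x ^ α * g x)) volume 0 1 :=
      (hint2.const_mul α).add (hint4.const_mul c)
    have := intervalIntegral.integral_eq_sub_of_hasDeriv_right_of_le zero_le_one hcontG hD hintD
    rw [intervalIntegral.integral_add (hint2.const_mul α) (hint4.const_mul c),
      intervalIntegral.integral_const_mul, intervalIntegral.integral_const_mul] at this
    rw [← hK₂, ← hL₂] at this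
    rw [this]
    norm_num [Real.zero_rpow hα.ne', Real.one_rpow]
  -- substitution in JL and JR
  have hcpow : c * c ^ (α - 1) = c ^ α := by
    rw [show α = 1 + (α - 1) by ring, Real.rpow_add hc0, Real.rpow_one]
    ring_nf
  have hJL : JL α a (a + c) f = (1 / Real.Gamma α) * (c ^ α * K₁) := by
    rw [JL, integral_affine_subst _ a c hc0.ne']
    have e : (∫ t in (0:ℝ)..1, (a + c - (a + t * c)) ^ (α - 1) * f (a + t * c)) =
        ∫ t in (0:ℝ)..1, c ^ (α - 1) * ((1 - t) ^ (α - 1) * f (a + t * c)) := by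
      apply intervalIntegral.integral_congr
      intro x hx
      rw [Set.uIcc_of_le zero_le_one] at hx
      show (a + c - (a + x * c)) ^ (α - 1) * f (a + x * c)
          = c ^ (α - 1) * ((1 - x) ^ (α - 1) * f (a + x * c))
      have e1 : a + c - (a + x * c) = c * (1 - x) := by ring
      rw [e1, Real.mul_rpow hc0.le (by linarith [hx.2] : (0:ℝ) ≤ 1 - x)]
      ring
    rw [e, intervalIntegral.integral_const_mul, ← hK₁, ← mul_assoc c (c ^ (α - 1)) K₁, hcpow]
  have hJR : JR α a (a + c) f = (1 / Real.Gamma α) * (c ^ α * K₂) := by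
    rw [JR, integral_affine_subst _ a c hc0.ne']
    have e : (∫ t in (0:ℝ)..1, (a + t * c - a) ^ (α - 1) * f (a + t * c)) =
        ∫ t in (0:ℝ)..1, c ^ (α - 1) * (t ^ (α - 1) * f (a + t * c)) := by
      apply intervalIntegral.integral_congr
      intro x hx
      rw [Set.uIcc_of_le zero_le_one] at hx
      show (a + x * c - a) ^ (α - 1) * f (a + x * c)
          = c ^ (α - 1) * (x ^ (α - 1) * f (a + x * c))
      have e1 : a + x * c - a = c * x := by ring
      rw [e1, Real.mul_rpow hc0.le hx.1]
      ring
    rw [e, intervalIntegral.integral_const_mul, ← hK₂, ← mul_assoc c (c ^ (α - 1)) K₂, hcpow]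
  -- the key identity
  have hΓ : 0 < Real.Gamma α := Real.Gamma_pos_of_pos hα
  have hcα : (0:ℝ) < c ^ α := Real.rpow_pos_of_pos hc0 α
  have key : (f a + f (a + c)) / 2 -
      Real.Gamma (α + 1) / (2 * c ^ α) * (JL α a (a + c) f + JR α a (a + c) f) =
      -(c / 2) * (L₁ - L₂) := by
    rw [hJL, hJR, Real.Gamma_add_one hα.ne']
    have e1 : K₁ = (f a + c * L₁) / α := by field_simp [hα.ne']; linarith
    have e2 : K₂ = (f (a + c) - c * L₂) / α := by field_simp [hα.ne']; linarith
    rw [e1, e2]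
    field_simp
    ring
  rw [key]
  -- the weight function
  set w : ℝ → ℝ := fun t => |(1 - t) ^ α - t ^ α| with hwdef
  have hw_cont : Continuous w := (hcont_1t.sub hcont_t).abs
  have hw_nonneg : ∀ t, 0 ≤ w t := fun t => abs_nonneg _
  have hw_le : ∀ t ∈ Set.Icc (0:ℝ) 1, w t ≤ 1 := by
    intro t ht
    have h1 : (1 - t) ^ α ≤ 1 := Real.rpow_le_one (by linarith [ht.2]) (by linarith [ht.1]) hα.le
    have h2 : t ^ α ≤ 1 := Real.rpow_le_one ht.1 ht.2 hα.le
    have h3 : 0 ≤ (1 - t) ^ α := Real.rpow_nonneg (by linarith [ht.2]) _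
    have h4 : 0 ≤ t ^ α := Real.rpow_nonneg ht.1 _
    rw [hwdef]
    simp only [abs_le]
    constructor <;> nlinarith
  have hw_symm : ∀ t, w (1 - t) = w t := by
    intro t
    simp only [hwdef, sub_sub_cancel]
    exact abs_sub_comm _ _
  -- S = ∫ w
  set S := ∫ t in (0:ℝ)..1, w t with hSdef
  have hw_int : ∀ u v : ℝ, IntervalIntegrable w volume u v := fun u v =>
    hw_cont.intervalIntegrable u v
  have hS_val : S = 2 / (α + 1) * (1 - (1/2) ^ α) := by
    have hα1 : (0:ℝ) < α + 1 := by linarith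
    have half1 : ∫ t in (0:ℝ)..(1/2 : ℝ), w t = (1 - 2 * (1/2) ^ (α+1)) / (α + 1) := by
      have e : (∫ t in (0:ℝ)..(1/2 : ℝ), w t) =
          ∫ t in (0:ℝ)..(1/2 : ℝ), ((1 - t) ^ α - t ^ α) := by
        apply intervalIntegral.integral_congr
        intro x hx
        rw [Set.uIcc_of_le (by norm_num : (0:ℝ) ≤ 1/2)] at hx
        have : x ^ α ≤ (1 - x) ^ α :=
          Real.rpow_le_rpow hx.1 (by linarith [hx.2]) hα.le
        rw [hwdef]
        exact abs_of_nonneg (by linarith)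
      rw [e, intervalIntegral.integral_sub
        ((hcont_1t.continuousOn).intervalIntegrable) ((hcont_t.continuousOn).intervalIntegrable)]
      have e1 : (∫ t in (0:ℝ)..(1/2:ℝ), (1 - t) ^ α) = ∫ x in (1/2:ℝ)..(1:ℝ), x ^ α := by
        rw [intervalIntegral.integral_comp_sub_left (fun x : ℝ => x ^ α) 1]
        norm_num
      have e2 : (∫ x in (1/2:ℝ)..(1:ℝ), x ^ α) = (1 - (1/2) ^ (α+1)) / (α + 1) := by
        rw [integral_rpow (Or.inl (by linarith))]
        rw [Real.one_rpow]
      have e3 : (∫ t in (0:ℝ)..(1/2:ℝ), t ^ α) = ((1/2) ^ (α+1)) / (α + 1) := by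
        rw [integral_rpow (Or.inl (by linarith))]
        rw [Real.zero_rpow (by linarith : α + 1 ≠ 0)]
        ring
      rw [e1, e2, e3]
      ring
    have half2 : ∫ t in (1/2 : ℝ)..(1:ℝ), w t = (1 - 2 * (1/2) ^ (α+1)) / (α + 1) := by
      have e0 : (∫ t in (1/2 : ℝ)..(1:ℝ), w t) = ∫ t in (0:ℝ)..(1/2:ℝ), w (1 - t) := by
        rw [intervalIntegral.integral_comp_sub_left w 1]
        norm_num
      rw [e0]
      have e1 : (∫ t in (0:ℝ)..(1/2:ℝ), w (1 - t)) = ∫ t in (0:ℝ)..(1/2:ℝ), w t := by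
        apply intervalIntegral.integral_congr
        intro x _
        exact hw_symm x
      rw [e1, half1]
    have := intervalIntegral.integral_add_adjacent_intervals (hw_int 0 (1/2)) (hw_int (1/2) 1)
    rw [hSdef, ← this, half1, half2]
    have h2 : ((1:ℝ)/2) ^ (α + 1) = (1/2) ^ α * (1/2) := by
      rw [Real.rpow_add (by norm_num : (0:ℝ) < 1/2), Real.rpow_one]
    rw [h2]
    field_simp
    ring
  have hS_nonneg : 0 ≤ S := by
    rw [hSdef]
    apply intervalIntegral.integral_nonneg zero_le_one
    intro t _
    exact hw_nonneg t
  -- |L₁ - L₂| ≤ ∫ w |g|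
  have habs1 : |L₁ - L₂| ≤ ∫ t in (0:ℝ)..1, w t * |g t| := by
    have e : L₁ - L₂ = ∫ t in (0:ℝ)..1, ((1 - t) ^ α - t ^ α) * g t := by
      rw [hL₁, hL₂, ← intervalIntegral.integral_sub hint3 hint4]
      apply intervalIntegral.integral_congr
      intro x _
      ring
    rw [e]
    have h := intervalIntegral.abs_integral_le_integral_abs (a := 0) (b := 1) (μ := volume)
      (f := fun t => ((1 - t) ^ α - t ^ α) * g t) zero_le_one
    calc |∫ t in (0:ℝ)..1, ((1 - t) ^ α - t ^ α) * g t|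
        ≤ ∫ t in (0:ℝ)..1, |((1 - t) ^ α - t ^ α) * g t| := h
      _ = ∫ t in (0:ℝ)..1, w t * |g t| := by
          apply intervalIntegral.integral_congr
          intro x _
          rw [hwdef]
          exact abs_mul _ _
  -- Hölder
  set p := q / (q - 1) with hpdef
  have hpq : p.HolderConjugate q := by
    refine (Real.holderConjugate_iff.mpr ⟨hq, ?_⟩).symm
    rw [hpdef]
    field_simp
    ring
  have hg_meas : Measurable g := by
    apply (measurable_deriv f).comp
    exact (measurable_id.mul_const c).const_add a
  have holder := holder_weight_01 w g p q hpq hw_cont hw_nonneg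
    (fun t ht => hw_le t (Set.Ioc_subset_Icc_self ht)) hg_meas ((A0 + B0) ^ (1/q))
    (fun t ht => hgbd t (Set.Ioc_subset_Icc_self ht))
  -- T ≤ S/2 * (A0 + B0)
  have hgq_meas : Measurable fun t => |g t| ^ q := (hg_meas.abs.pow_const q)
  have hgq_int : IntervalIntegrable (fun t => |g t| ^ q) volume 0 1 := by
    rw [intervalIntegrable_iff_integrableOn_Icc_of_le zero_le_one]
    apply Integrable.mono' (integrable_const (A0 + B0)) hgq_meas.aestronglyMeasurable
    filter_upwards [ae_restrict_mem measurableSet_Icc] with t ht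
    rw [Real.norm_eq_abs, abs_of_nonneg (Real.rpow_nonneg (abs_nonneg _) _)]
    calc |g t| ^ q ≤ (1 - t) * A0 + t * B0 := hpre' t ht
      _ ≤ A0 + B0 := by nlinarith [ht.1, ht.2]
  have hwgq_int : IntervalIntegrable (fun t => w t * |g t| ^ q) volume 0 1 :=
    hgq_int.continuousOn_mul hw_cont.continuousOn
  have hT_le : (∫ t in (0:ℝ)..1, w t * |g t| ^ q) ≤ S * ((A0 + B0) / 2) := by
    have step1 : (∫ t in (0:ℝ)..1, w t * |g t| ^ q) ≤
        ∫ t in (0:ℝ)..1, w t * ((1 - t) * A0 + t * B0) := by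
      apply intervalIntegral.integral_mono_on zero_le_one hwgq_int
      · exact (hw_cont.mul (((continuous_const.sub continuous_id).mul continuous_const).add
          (continuous_id.mul continuous_const))).continuousOn.intervalIntegrable
      · intro t ht
        exact mul_le_mul_of_nonneg_left (hpre' t ht) (hw_nonneg t)
    have J1eqJ2 : (∫ t in (0:ℝ)..1, w t * (1 - t)) = ∫ t in (0:ℝ)..1, w t * t := by
      have e0 : (∫ t in (0:ℝ)..1, w t * (1 - t)) = ∫ t in (0:ℝ)..1, w (1 - t) * (1 - t) := by
        apply intervalIntegral.integral_congr
        intro x _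
        show w x * (1 - x) = w (1 - x) * (1 - x)
        rw [hw_symm x]
      rw [e0]
      rw [intervalIntegral.integral_comp_sub_left (fun x : ℝ => w x * x) 1]
      norm_num
    have hwt_int : IntervalIntegrable (fun t => w t * t) volume 0 1 :=
      (hw_cont.mul continuous_id).continuousOn.intervalIntegrable
    have hw1t_int : IntervalIntegrable (fun t => w t * (1 - t)) volume 0 1 :=
      (hw_cont.mul (continuous_const.sub continuous_id)).continuousOn.intervalIntegrable
    have sum_eq : (∫ t in (0:ℝ)..1, w t * (1 - t)) + (∫ t in (0:ℝ)..1, w t * t) = S := by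
      rw [← intervalIntegral.integral_add hw1t_int hwt_int, hSdef]
      apply intervalIntegral.integral_congr
      intro x _
      ring
    have J2val : (∫ t in (0:ℝ)..1, w t * t) = S / 2 := by linarith
    have J1val : (∫ t in (0:ℝ)..1, w t * (1 - t)) = S / 2 := by linarith
    have split : (∫ t in (0:ℝ)..1, w t * ((1 - t) * A0 + t * B0)) =
        A0 * (∫ t in (0:ℝ)..1, w t * (1 - t)) + B0 * (∫ t in (0:ℝ)..1, w t * t) := by
      rw [← intervalIntegral.integral_const_mul, ← intervalIntegral.integral_const_mul,
        ← intervalIntegral.integral_add ((hw1t_int).const_mul A0) ((hwt_int).const_mul B0)]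
      apply intervalIntegral.integral_congr
      intro x _
      ring
    calc (∫ t in (0:ℝ)..1, w t * |g t| ^ q) ≤
        ∫ t in (0:ℝ)..1, w t * ((1 - t) * A0 + t * B0) := step1
      _ = A0 * (S / 2) + B0 * (S / 2) := by rw [split, J1val, J2val]
      _ = S * ((A0 + B0) / 2) := by ring
  -- put everything together
  have hwg_nonneg : 0 ≤ ∫ t in (0:ℝ)..1, w t * |g t| ^ q := by
    apply intervalIntegral.integral_nonneg zero_le_one
    intro t _
    exact mul_nonneg (hw_nonneg t) (Real.rpow_nonneg (abs_nonneg _) _)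
  have hrpow_mono : (∫ t in (0:ℝ)..1, w t * |g t| ^ q) ^ (1/q) ≤
      (S * ((A0 + B0) / 2)) ^ (1/q) :=
    Real.rpow_le_rpow hwg_nonneg hT_le (by positivity)
  have hfinal : |L₁ - L₂| ≤ S ^ (1/p) * (S ^ (1/q) * ((A0 + B0) / 2) ^ (1/q)) := by
    have h1 : |L₁ - L₂| ≤ S ^ (1/p) * (∫ t in (0:ℝ)..1, w t * |g t| ^ q) ^ (1/q) :=
      le_trans habs1 holder
    have h2 : (S * ((A0 + B0) / 2)) ^ (1/q) = S ^ (1/q) * ((A0 + B0) / 2) ^ (1/q) :=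
      Real.mul_rpow hS_nonneg (by positivity)
    calc |L₁ - L₂| ≤ S ^ (1/p) * (∫ t in (0:ℝ)..1, w t * |g t| ^ q) ^ (1/q) := h1
      _ ≤ S ^ (1/p) * (S * ((A0 + B0) / 2)) ^ (1/q) :=
          mul_le_mul_of_nonneg_left hrpow_mono (Real.rpow_nonneg hS_nonneg _)
      _ = S ^ (1/p) * (S ^ (1/q) * ((A0 + B0) / 2) ^ (1/q)) := by rw [h2]
  have hSS : S ^ (1/p) * S ^ (1/q) = S := by
    rw [← Real.rpow_add' hS_nonneg]
    · rw [one_div, one_div, hpq.inv_add_inv_eq_one, Real.rpow_one]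
    · rw [one_div, one_div, hpq.inv_add_inv_eq_one]; norm_num
  -- final computation
  rw [abs_mul, abs_neg, abs_of_nonneg (by positivity : (0:ℝ) ≤ c / 2)]
  have hhalf : ((1:ℝ)/2) ^ α = 1 / 2 ^ α := by
    rw [Real.div_rpow zero_le_one (by norm_num : (0:ℝ) ≤ 2), Real.one_rpow]
  calc c / 2 * |L₁ - L₂| ≤ c / 2 * (S ^ (1/p) * (S ^ (1/q) * ((A0 + B0) / 2) ^ (1/q))) :=
        mul_le_mul_of_nonneg_left hfinal (by positivity)
    _ = c / 2 * S * ((A0 + B0) / 2) ^ (1/q) := by rw [← mul_assoc (S ^ (1/p)), hSS]; ring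
    _ = c / (α + 1) * (1 - 1 / 2 ^ α) * ((A0 + B0) / 2) ^ (1/q) := by
        rw [hS_val, hhalf]
        have : α + 1 ≠ 0 := by linarith
        field_simp
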